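/- arXiv:2208.14014 — 2 statements merged into one kernel-verified Lean document; each statement's English description precedes it below -/
import Mathlib

section
/- Let q ∈ (0, 1/2). Suppose F : ℝ → ℝ is globally q-Lipschitz with F(0) = 0, and g : ℝ → ℝ is continuous, nondecreasing, with g(0) = 0, and satisfies α₁|s| ≤ |g(s)| ≤ α₂|s| for all s ∈ ℝ, where 0 < α₁ ≤ α₂ and α₁/(1 + α₂²) > q. Let μ > 0 be the exponential decay rate of the energy for this system. Then there exists a constant M' > 0 such that every classical solution u satisfies, for all t ≥ 0: inf over c ∈ ℝ of [∫₀^L |u(x,t) − c|² dx + |u(0,t) − c|² + ∫₀^L |∂ₓu(x,t)|² dx + ∫₀^L |∂ₜu(x,t)|² dx + |∂ₜu(0,t)|²] ≤ M'·exp(−μt)·E^u(0); that is, the squared energy-space distance from the state to the set of stationary (constant) states decays exponentially. -/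
open MeasureTheory Set

/-- Spatial partial derivative `∂ₓu`. -/
noncomputable def uX (u : ℝ → ℝ → ℝ) (x t : ℝ) : ℝ := deriv (fun y => u y t) x

/-- Time partial derivative `∂ₜu`. -/
noncomputable def uT (u : ℝ → ℝ → ℝ) (x t : ℝ) : ℝ := deriv (fun s => u x s) t

/-- Second time partial derivative `∂ₜₜu`. -/
noncomputable def uTT (u : ℝ → ℝ → ℝ) (x t : ℝ) : ℝ := deriv (fun s => uT u x s) t

/-- Second spatial partial derivative `∂ₓₓu`. -/
noncomputable def uXX (u : ℝ → ℝ → ℝ) (x t : ℝ) : ℝ := deriv (fun y => uX u y t) x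

/-- A classical solution of the boundary control system: `u` is C² on `[0,L] × [0,∞)`,
satisfies the wave equation on `(0,L) × (0,∞)`, the dynamic boundary condition at `x = 0`
and the Neumann feedback condition at `x = L`. -/
def IsClassicalSolution (L : ℝ) (F g : ℝ → ℝ) (u : ℝ → ℝ → ℝ) : Prop :=
  ContDiffOn ℝ 2 (fun p : ℝ × ℝ => u p.1 p.2) (Icc 0 L ×ˢ Ici 0) ∧
  (∀ x ∈ Ioo 0 L, ∀ t : ℝ, 0 < t → uTT u x t = uXX u x t) ∧
  (∀ t : ℝ, 0 ≤ t → uTT u 0 t - uX u 0 t = F (uT u 0 t)) ∧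
  (∀ t : ℝ, 0 ≤ t → uX u L t = - g (uT u L t))

/-- The mechanical energy of a classical solution. -/
noncomputable def energy (L : ℝ) (u : ℝ → ℝ → ℝ) (t : ℝ) : ℝ :=
  (1/2) * (∫ x in (0:ℝ)..L, ((uX u x t)^2 + (uT u x t)^2)) + (1/2) * (uT u 0 t)^2

/-! ### Auxiliary machinery -/

/-- The full (within-set) Fréchet derivative of `u` on `[0,L] × [0,∞)`. -/
noncomputable def pd (L : ℝ) (u : ℝ → ℝ → ℝ) (p : ℝ × ℝ) : ℝ × ℝ →L[ℝ] ℝ :=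
  fderivWithin ℝ (fun p : ℝ × ℝ => u p.1 p.2) (Icc 0 L ×ˢ Ici 0) p

section Aux

variable {L : ℝ} {u : ℝ → ℝ → ℝ}

lemma sliceX (hu : ContDiffOn ℝ 2 (fun p : ℝ × ℝ => u p.1 p.2) (Icc 0 L ×ˢ Ici 0))
    {t x : ℝ} (ht : 0 ≤ t) (hx : x ∈ Icc 0 L) :
    HasDerivWithinAt (fun y => u y t) (pd L u (x, t) (1, 0)) (Icc 0 L) x := by
  have hdiff : DifferentiableWithinAt ℝ (fun p : ℝ × ℝ => u p.1 p.2) (Icc 0 L ×ˢ Ici 0) (x, t) :=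
    (hu.differentiableOn (by norm_num)) (x, t) ⟨hx, ht⟩
  have hγ : HasDerivWithinAt (fun y : ℝ => (y, t)) ((1 : ℝ), (0 : ℝ)) (Icc 0 L) x :=
    ((hasDerivAt_id x).prodMk (hasDerivAt_const x t)).hasDerivWithinAt
  have hmaps : MapsTo (fun y : ℝ => (y, t)) (Icc 0 L) (Icc 0 L ×ˢ Ici 0) :=
    fun y hy => ⟨hy, ht⟩
  exact hdiff.hasFDerivWithinAt.comp_hasDerivWithinAt x hγ hmaps

lemma sliceT (hu : ContDiffOn ℝ 2 (fun p : ℝ × ℝ => u p.1 p.2) (Icc 0 L ×ˢ Ici 0))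
    {t x : ℝ} (ht : 0 ≤ t) (hx : x ∈ Icc 0 L) :
    HasDerivWithinAt (fun s => u x s) (pd L u (x, t) (0, 1)) (Ici 0) t := by
  have hdiff : DifferentiableWithinAt ℝ (fun p : ℝ × ℝ => u p.1 p.2) (Icc 0 L ×ˢ Ici 0) (x, t) :=
    (hu.differentiableOn (by norm_num)) (x, t) ⟨hx, ht⟩
  have hγ : HasDerivWithinAt (fun s : ℝ => (x, s)) ((0 : ℝ), (1 : ℝ)) (Ici 0) t :=
    ((hasDerivAt_const t x).prodMk (hasDerivAt_id t)).hasDerivWithinAt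
  exact hdiff.hasFDerivWithinAt.comp_hasDerivWithinAt t hγ (fun s hs => ⟨hx, hs⟩)

lemma uX_eq (hu : ContDiffOn ℝ 2 (fun p : ℝ × ℝ => u p.1 p.2) (Icc 0 L ×ˢ Ici 0))
    {t x : ℝ} (ht : 0 ≤ t) (hx : x ∈ Ioo 0 L) :
    uX u x t = pd L u (x, t) (1, 0) := by
  have h := (sliceX hu ht (Ioo_subset_Icc_self hx)).hasDerivAt
    (Icc_mem_nhds hx.1 hx.2)
  exact h.deriv

lemma uT_eq (hu : ContDiffOn ℝ 2 (fun p : ℝ × ℝ => u p.1 p.2) (Icc 0 L ×ˢ Ici 0))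
    {t x : ℝ} (ht : 0 < t) (hx : x ∈ Icc 0 L) :
    uT u x t = pd L u (x, t) (0, 1) := by
  have h := (sliceT hu ht.le hx).hasDerivAt (Ici_mem_nhds ht)
  exact h.deriv

lemma uT_sq_le (hu : ContDiffOn ℝ 2 (fun p : ℝ × ℝ => u p.1 p.2) (Icc 0 L ×ˢ Ici 0))
    {t x : ℝ} (ht : 0 ≤ t) (hx : x ∈ Icc 0 L) :
    (uT u x t)^2 ≤ (pd L u (x, t) (0, 1))^2 := by
  by_cases hd : DifferentiableAt ℝ (fun s => u x s) t
  · have h1 : HasDerivWithinAt (fun s => u x s) (uT u x t) (Ici 0) t :=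
      hd.hasDerivAt.hasDerivWithinAt
    have h2 := sliceT hu ht hx
    have hun : UniqueDiffWithinAt ℝ (Ici (0:ℝ)) t := uniqueDiffOn_Ici 0 t ht
    have heq : uT u x t = pd L u (x, t) (0, 1) :=
      (h1.derivWithin hun).symm.trans (h2.derivWithin hun)
    rw [heq]
  · have h0 : uT u x t = 0 := deriv_zero_of_not_differentiableAt hd
    rw [h0]
    simpa using sq_nonneg (pd L u (x, t) (0, 1))

lemma pd_cont (hL : 0 < L)
    (hu : ContDiffOn ℝ 2 (fun p : ℝ × ℝ => u p.1 p.2) (Icc 0 L ×ˢ Ici 0)) :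
    ContinuousOn (pd L u) (Icc 0 L ×ˢ Ici 0) :=
  hu.continuousOn_fderivWithin ((uniqueDiffOn_Icc hL).prod (uniqueDiffOn_Ici 0))
    (by norm_num)

lemma pd_slice_cont (hL : 0 < L)
    (hu : ContDiffOn ℝ 2 (fun p : ℝ × ℝ => u p.1 p.2) (Icc 0 L ×ˢ Ici 0))
    {t : ℝ} (ht : 0 ≤ t) (e : ℝ × ℝ) :
    ContinuousOn (fun x : ℝ => pd L u (x, t) e) (Icc 0 L) := by
  have hmaps : MapsTo (fun y : ℝ => (y, t)) (Icc 0 L) (Icc 0 L ×ˢ Ici 0) :=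
    fun y hy => ⟨hy, ht⟩
  have h1 : ContinuousOn (fun x : ℝ => pd L u (x, t)) (Icc 0 L) :=
    (pd_cont hL hu).comp ((continuous_id.prodMk continuous_const).continuousOn) hmaps
  exact h1.clm_apply continuousOn_const

lemma slice_cont (hu : ContDiffOn ℝ 2 (fun p : ℝ × ℝ => u p.1 p.2) (Icc 0 L ×ˢ Ici 0))
    {t : ℝ} (ht : 0 ≤ t) :
    ContinuousOn (fun y : ℝ => u y t) (Icc 0 L) := by
  have hmaps : MapsTo (fun y : ℝ => (y, t)) (Icc 0 L) (Icc 0 L ×ˢ Ici 0) :=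
    fun y hy => ⟨hy, ht⟩
  exact hu.continuousOn.comp ((continuous_id.prodMk continuous_const).continuousOn) hmaps

/-- Elementary Cauchy–Schwarz for interval integrals of continuous functions. -/
lemma sq_int_le {f : ℝ → ℝ} {b : ℝ} (hb : 0 ≤ b)
    (hf : ContinuousOn f (Icc 0 b)) :
    (∫ y in (0:ℝ)..b, f y)^2 ≤ b * ∫ y in (0:ℝ)..b, (f y)^2 := by
  rcases eq_or_lt_of_le hb with rfl | hb'
  · simp
  have hif : IntervalIntegrable f volume 0 b :=
    (hf.mono (by rw [uIcc_of_le hb])).intervalIntegrable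
  have hif2 : IntervalIntegrable (fun y => (f y)^2) volume 0 b :=
    ((hf.pow 2).mono (by rw [uIcc_of_le hb])).intervalIntegrable
  set I := ∫ y in (0:ℝ)..b, f y with hI
  set J := ∫ y in (0:ℝ)..b, (f y)^2 with hJ
  have key : (0:ℝ) ≤ ∫ y in (0:ℝ)..b, (b * f y - I)^2 := by
    apply intervalIntegral.integral_nonneg hb
    intro y _; positivity
  have expand : (∫ y in (0:ℝ)..b, (b * f y - I)^2)
      = b^2 * J - 2 * b * I * I + I^2 * b := by
    have hpt : ∀ y : ℝ, (b * f y - I)^2 = b^2 * (f y)^2 - (2 * b * I) * f y + I^2 := by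
      intro y; ring
    rw [intervalIntegral.integral_congr (g := fun y => b^2 * (f y)^2 - (2*b*I) * f y + I^2)
      (fun y _ => hpt y)]
    rw [intervalIntegral.integral_add (((hif2.const_mul _).sub (hif.const_mul _)))
      intervalIntegrable_const,
      intervalIntegral.integral_sub (hif2.const_mul _) (hif.const_mul _),
      intervalIntegral.integral_const_mul, intervalIntegral.integral_const_mul,
      intervalIntegral.integral_const]
    simp [hI, hJ]; ring
  rw [expand] at key
  nlinarith [key]

/-- Fundamental theorem of calculus for the spatial slice. -/
lemma ftc_slice (hL : 0 < L)
    (hu : ContDiffOn ℝ 2 (fun p : ℝ × ℝ => u p.1 p.2) (Icc 0 L ×ˢ Ici 0))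
    {t x : ℝ} (ht : 0 ≤ t) (hx : x ∈ Icc 0 L) :
    u x t - u 0 t = ∫ y in (0:ℝ)..x, pd L u (y, t) (1, 0) := by
  rw [intervalIntegral.integral_eq_sub_of_hasDeriv_right_of_le hx.1
    ((slice_cont hu ht).mono (Icc_subset_Icc le_rfl hx.2))
    (fun y hy => ((sliceX hu ht ⟨hy.1.le, hy.2.le.trans hx.2⟩).hasDerivAt
      (Icc_mem_nhds hy.1 (hy.2.trans_le hx.2))).hasDerivWithinAt)
    (((pd_slice_cont hL hu ht (1,0)).mono
      (by rw [uIcc_of_le hx.1]; exact Icc_subset_Icc le_rfl hx.2)).intervalIntegrable)]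

/-- Poincaré-type inequality. -/
lemma poincare (hL : 0 < L)
    (hu : ContDiffOn ℝ 2 (fun p : ℝ × ℝ => u p.1 p.2) (Icc 0 L ×ˢ Ici 0))
    {t : ℝ} (ht : 0 ≤ t) :
    (∫ x in (0:ℝ)..L, (u x t - u 0 t)^2)
      ≤ L^2 * ∫ y in (0:ℝ)..L, (pd L u (y, t) (1, 0))^2 := by
  set J := ∫ y in (0:ℝ)..L, (pd L u (y, t) (1, 0))^2 with hJdef
  have hJ0 : 0 ≤ J := intervalIntegral.integral_nonneg hL.le (fun y _ => sq_nonneg _)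
  have hDf2 : IntervalIntegrable (fun y => (pd L u (y, t) (1,0))^2) volume 0 L :=
    (((pd_slice_cont hL hu ht (1,0)).pow 2).mono (by rw [uIcc_of_le hL.le])).intervalIntegrable
  have hpt : ∀ x ∈ Icc (0:ℝ) L, (u x t - u 0 t)^2 ≤ L * J := by
    intro x hx
    rw [ftc_slice hL hu ht hx]
    calc (∫ y in (0:ℝ)..x, pd L u (y, t) (1, 0))^2
        ≤ x * ∫ y in (0:ℝ)..x, (pd L u (y, t) (1, 0))^2 :=
          sq_int_le hx.1 ((pd_slice_cont hL hu ht (1,0)).mono (Icc_subset_Icc le_rfl hx.2))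
      _ ≤ L * J := by
          apply mul_le_mul hx.2
            (intervalIntegral.integral_mono_interval le_rfl hx.1 hx.2
              (ae_of_all _ (fun y => sq_nonneg _)) hDf2)
            (intervalIntegral.integral_nonneg hx.1 (fun y _ => sq_nonneg _)) hL.le
  calc (∫ x in (0:ℝ)..L, (u x t - u 0 t)^2)
      ≤ ∫ _x in (0:ℝ)..L, L * J := by
        apply intervalIntegral.integral_mono_on hL.le _ intervalIntegrable_const hpt
        exact ((((slice_cont hu ht).sub continuousOn_const).pow 2).mono
          (by rw [uIcc_of_le hL.le])).intervalIntegrable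
    _ = L^2 * J := by
        rw [intervalIntegral.integral_const]
        simp [smul_eq_mul]; ring

lemma ae_ne_right {a : ℝ} : ∀ᵐ x : ℝ ∂(volume : Measure ℝ), x ≠ a := by
  have h : {x : ℝ | ¬ x ≠ a} = {a} := by ext y; simp
  rw [MeasureTheory.ae_iff, h]
  exact measure_singleton a

/-- The integral of `uX²` equals the integral of the honest derivative squared. -/
lemma int_uX_eq (hL : 0 < L)
    (hu : ContDiffOn ℝ 2 (fun p : ℝ × ℝ => u p.1 p.2) (Icc 0 L ×ˢ Ici 0))
    {t : ℝ} (ht : 0 ≤ t) :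
    (∫ x in (0:ℝ)..L, (uX u x t)^2) = ∫ x in (0:ℝ)..L, (pd L u (x, t) (1, 0))^2 := by
  apply intervalIntegral.integral_congr_ae
  filter_upwards [ae_ne_right (a := L)] with x hxL hx
  rw [uIoc_of_le hL.le] at hx
  rw [uX_eq hu ht ⟨hx.1, lt_of_le_of_ne hx.2 hxL⟩]

/-- Bound on the integral of `uT²`. -/
lemma int_uT_le (hL : 0 < L)
    (hu : ContDiffOn ℝ 2 (fun p : ℝ × ℝ => u p.1 p.2) (Icc 0 L ×ˢ Ici 0))
    {t : ℝ} (ht : 0 ≤ t) :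
    (∫ x in (0:ℝ)..L, (uT u x t)^2) ≤ ∫ x in (0:ℝ)..L, (pd L u (x, t) (0, 1))^2 := by
  by_cases hint : IntervalIntegrable (fun x => (uT u x t)^2) volume 0 L
  · apply intervalIntegral.integral_mono_on hL.le hint
      ((((pd_slice_cont hL hu ht (0,1)).pow 2).mono
        (by rw [uIcc_of_le hL.le])).intervalIntegrable)
    exact fun x hx => uT_sq_le hu ht hx
  · rw [intervalIntegral.integral_undef hint]
    exact intervalIntegral.integral_nonneg hL.le (fun x _ => sq_nonneg _)

/-- At a positive time, the energy splits into the honest derivative pieces. -/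
lemma energy_eq_pd (hL : 0 < L)
    (hu : ContDiffOn ℝ 2 (fun p : ℝ × ℝ => u p.1 p.2) (Icc 0 L ×ˢ Ici 0))
    {t : ℝ} (ht : 0 < t) :
    energy L u t = (1/2) * ((∫ x in (0:ℝ)..L, (pd L u (x, t) (1, 0))^2)
        + (∫ x in (0:ℝ)..L, (pd L u (x, t) (0, 1))^2))
      + (1/2) * (pd L u (0, t) (0, 1))^2 := by
  have h1 : (∫ x in (0:ℝ)..L, ((uX u x t)^2 + (uT u x t)^2))
      = ∫ x in (0:ℝ)..L, ((pd L u (x, t) (1, 0))^2 + (pd L u (x, t) (0, 1))^2) := by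
    apply intervalIntegral.integral_congr_ae
    filter_upwards [ae_ne_right (a := L)] with x hxL hx
    rw [uIoc_of_le hL.le] at hx
    have hxIoo : x ∈ Ioo (0:ℝ) L := ⟨hx.1, lt_of_le_of_ne hx.2 hxL⟩
    rw [uX_eq hu ht.le hxIoo, uT_eq hu ht (Ioo_subset_Icc_self hxIoo)]
  have h2 : (∫ x in (0:ℝ)..L, ((pd L u (x, t) (1, 0))^2 + (pd L u (x, t) (0, 1))^2))
      = (∫ x in (0:ℝ)..L, (pd L u (x, t) (1, 0))^2)
        + ∫ x in (0:ℝ)..L, (pd L u (x, t) (0, 1))^2 := by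
    apply intervalIntegral.integral_add
    · exact (((pd_slice_cont hL hu ht.le (1,0)).pow 2).mono
        (by rw [uIcc_of_le hL.le])).intervalIntegrable
    · exact (((pd_slice_cont hL hu ht.le (0,1)).pow 2).mono
        (by rw [uIcc_of_le hL.le])).intervalIntegrable
  have h3 : uT u 0 t = pd L u (0, t) (0, 1) := uT_eq hu ht ⟨le_rfl, hL.le⟩
  rw [energy, h1, h2, h3]

lemma seq_tendsto {t : ℝ} :
    Filter.Tendsto (fun n : ℕ => t + 1/((n:ℝ)+1)) Filter.atTop (nhds t) := by
  simpa using tendsto_one_div_add_atTop_nhds_zero_nat.const_add t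

lemma seq_mem {t : ℝ} (n : ℕ) : t < t + 1/((n:ℝ)+1) ∧ t + 1/((n:ℝ)+1) ≤ t + 1 := by
  constructor
  · have : (0:ℝ) < 1/((n:ℝ)+1) := by positivity
    linarith
  · have : (1:ℝ)/((n:ℝ)+1) ≤ 1 := by
      rw [div_le_one (by positivity)]
      simp
    linarith

/-- Convergence of the parametric integral along the sequence `t + 1/(n+1)`. -/
lemma tendsto_pd_sq_int (hL : 0 < L)
    (hu : ContDiffOn ℝ 2 (fun p : ℝ × ℝ => u p.1 p.2) (Icc 0 L ×ˢ Ici 0))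
    (e : ℝ × ℝ) (he : ‖e‖ ≤ 1) {t : ℝ} (ht : 0 ≤ t) :
    Filter.Tendsto (fun n : ℕ => ∫ x in (0:ℝ)..L, (pd L u (x, t + 1/((n:ℝ)+1)) e)^2)
      Filter.atTop (nhds (∫ x in (0:ℝ)..L, (pd L u (x, t) e)^2)) := by
  have hseq : ∀ n : ℕ, 0 ≤ t + 1/((n:ℝ)+1) := fun n => ht.trans (seq_mem n).1.le
  have hconv : ∀ n : ℕ,
      (∫ x in (0:ℝ)..L, (pd L u (x, t + 1/((n:ℝ)+1)) e)^2)
        = ∫ x in Ioc (0:ℝ) L, (pd L u (x, t + 1/((n:ℝ)+1)) e)^2 := fun n =>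
    intervalIntegral.integral_of_le hL.le
  simp only [hconv, intervalIntegral.integral_of_le hL.le]
  -- compact bound
  have hKS : (Icc (0:ℝ) L ×ˢ Icc (0:ℝ) (t+1)) ⊆ Icc 0 L ×ˢ Ici 0 :=
    prod_mono subset_rfl (fun s hs => hs.1)
  obtain ⟨C, hC⟩ := (isCompact_Icc.prod isCompact_Icc).exists_bound_of_continuousOn
    ((pd_cont hL hu).mono hKS)
  apply MeasureTheory.tendsto_integral_of_dominated_convergence (bound := fun _ => C^2)
  · intro n
    exact (ContinuousOn.aestronglyMeasurable (μ := volume)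
      (((pd_slice_cont hL hu (hseq n) e).pow 2).mono Ioc_subset_Icc_self)
      measurableSet_Ioc)
  · exact (MeasureTheory.integrableOn_const_iff (s := Ioc (0:ℝ) L) (μ := volume)
      (C := C^2)).2 (Or.inr measure_Ioc_lt_top)
  · intro n
    rw [MeasureTheory.ae_restrict_iff' measurableSet_Ioc]
    apply MeasureTheory.ae_of_all
    intro x hx
    have hmem : ((x, t + 1/((n:ℝ)+1)) : ℝ × ℝ) ∈ Icc (0:ℝ) L ×ˢ Icc (0:ℝ) (t+1) :=
      ⟨Ioc_subset_Icc_self hx, ⟨hseq n, (seq_mem n).2⟩⟩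
    have hb : |pd L u (x, t + 1/((n:ℝ)+1)) e| ≤ C := by
      calc |pd L u (x, t + 1/((n:ℝ)+1)) e|
          ≤ ‖pd L u (x, t + 1/((n:ℝ)+1))‖ * ‖e‖ :=
            (pd L u (x, t + 1/((n:ℝ)+1))).le_opNorm e
        _ ≤ C * 1 := mul_le_mul (hC _ hmem) he (norm_nonneg _)
            ((norm_nonneg _).trans (hC _ hmem))
        _ = C := mul_one C
    have habs := abs_nonneg (pd L u (x, t + 1/((n:ℝ)+1)) e)
    rw [Real.norm_eq_abs, abs_of_nonneg (sq_nonneg _)]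
    nlinarith [sq_abs (pd L u (x, t + 1/((n:ℝ)+1)) e)]
  · rw [MeasureTheory.ae_restrict_iff' measurableSet_Ioc]
    apply MeasureTheory.ae_of_all
    intro x hx
    have hxI : x ∈ Icc (0:ℝ) L := Ioc_subset_Icc_self hx
    have hcw : ContinuousWithinAt (pd L u) (Icc 0 L ×ˢ Ici 0) (x, t) :=
      (pd_cont hL hu) (x, t) ⟨hxI, ht⟩
    have hseqt : Filter.Tendsto (fun n : ℕ => ((x, t + 1/((n:ℝ)+1)) : ℝ × ℝ))
        Filter.atTop (nhdsWithin (x, t) (Icc 0 L ×ˢ Ici 0)) := by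
      rw [tendsto_nhdsWithin_iff]
      exact ⟨tendsto_const_nhds.prodMk_nhds seq_tendsto,
        Filter.Eventually.of_forall (fun n => ⟨hxI, hseq n⟩)⟩
    have h1 : Filter.Tendsto (fun n : ℕ => pd L u (x, t + 1/((n:ℝ)+1)))
        Filter.atTop (nhds (pd L u (x, t))) := hcw.tendsto.comp hseqt
    have h2 : Continuous (fun A : ℝ × ℝ →L[ℝ] ℝ => (A e)^2) :=
      (continuous_pow 2).comp (ContinuousLinearMap.apply ℝ ℝ e).continuous
    exact (h2.tendsto _).comp h1

/-- Convergence of the pointwise boundary term along the sequence `t + 1/(n+1)`. -/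
lemma tendsto_pd_sq_pt (hL : 0 < L)
    (hu : ContDiffOn ℝ 2 (fun p : ℝ × ℝ => u p.1 p.2) (Icc 0 L ×ˢ Ici 0))
    (e : ℝ × ℝ) {t : ℝ} (ht : 0 ≤ t) :
    Filter.Tendsto (fun n : ℕ => (pd L u (0, t + 1/((n:ℝ)+1)) e)^2)
      Filter.atTop (nhds ((pd L u (0, t) e)^2)) := by
  have hseq : ∀ n : ℕ, 0 ≤ t + 1/((n:ℝ)+1) := fun n => ht.trans (seq_mem n).1.le
  have hcw : ContinuousWithinAt (pd L u) (Icc 0 L ×ˢ Ici 0) (0, t) :=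
    (pd_cont hL hu) (0, t) ⟨⟨le_rfl, hL.le⟩, ht⟩
  have hseqt : Filter.Tendsto (fun n : ℕ => (((0:ℝ), t + 1/((n:ℝ)+1)) : ℝ × ℝ))
      Filter.atTop (nhdsWithin (0, t) (Icc 0 L ×ˢ Ici 0)) := by
    rw [tendsto_nhdsWithin_iff]
    exact ⟨tendsto_const_nhds.prodMk_nhds seq_tendsto,
      Filter.Eventually.of_forall (fun n => ⟨⟨le_rfl, hL.le⟩, hseq n⟩)⟩
  have h1 := hcw.tendsto.comp hseqt
  have h2 : Continuous (fun A : ℝ × ℝ →L[ℝ] ℝ => (A e)^2) :=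
    (continuous_pow 2).comp (ContinuousLinearMap.apply ℝ ℝ e).continuous
  exact (h2.tendsto _).comp h1

end Aux

/-- **Uniform attractivity of the set of stationary states in the anti-damping case.**
Under the hypotheses of the anti-damping stability theorem, with `μ > 0` the exponential decay
rate of the energy, the squared energy-space distance from the state to the set of stationary
(constant) states decays exponentially. -/
theorem attractivity_anti_damping
    (L q α₁ α₂ : ℝ) (hL : 0 < L) (hq : 0 < q) (hq2 : q < 1/2)
    (hα₁ : 0 < α₁) (hα₁₂ : α₁ ≤ α₂) (hqα : q < α₁ / (1 + α₂^2))
    (F g : ℝ → ℝ)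
    (hFlip : ∀ a b : ℝ, |F a - F b| ≤ q * |a - b|) (hF0 : F 0 = 0)
    (hgc : Continuous g) (hgm : Monotone g) (hg0 : g 0 = 0)
    (hsector : ∀ s : ℝ, α₁ * |s| ≤ |g s| ∧ |g s| ≤ α₂ * |s|)
    (M μ : ℝ) (hM : 0 < M) (hμ : 0 < μ)
    (hdecay : ∀ u : ℝ → ℝ → ℝ, IsClassicalSolution L F g u → ∀ t : ℝ, 0 ≤ t →
      energy L u t ≤ M * Real.exp (-μ * t) * energy L u 0) :
    ∃ M' : ℝ, 0 < M' ∧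
      ∀ u : ℝ → ℝ → ℝ, IsClassicalSolution L F g u → ∀ t : ℝ, 0 ≤ t →
        (⨅ c : ℝ, ((∫ x in (0:ℝ)..L, (u x t - c)^2) + (u 0 t - c)^2
            + (∫ x in (0:ℝ)..L, (uX u x t)^2)
            + (∫ x in (0:ℝ)..L, (uT u x t)^2) + (uT u 0 t)^2))
          ≤ M' * Real.exp (-μ * t) * energy L u 0 := by
  refine ⟨2 * M * (L^2 + 3), by positivity, ?_⟩
  intro u hsol t ht
  have hu := hsol.1
  set E0 := energy L u 0 with hE0
  set K := 2 * M * Real.exp (-μ * t) * E0 with hKdef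
  -- key limit bounds
  have hbound : ∀ n : ℕ,
      ((∫ x in (0:ℝ)..L, (pd L u (x, t + 1/((n:ℝ)+1)) (1,0))^2)
          ≤ 2 * M * Real.exp (-μ * (t + 1/((n:ℝ)+1))) * E0)
      ∧ ((∫ x in (0:ℝ)..L, (pd L u (x, t + 1/((n:ℝ)+1)) (0,1))^2)
          ≤ 2 * M * Real.exp (-μ * (t + 1/((n:ℝ)+1))) * E0)
      ∧ ((pd L u (0, t + 1/((n:ℝ)+1)) (0,1))^2
          ≤ 2 * M * Real.exp (-μ * (t + 1/((n:ℝ)+1))) * E0) := by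
    intro n
    have hs : 0 < t + 1/((n:ℝ)+1) := lt_of_le_of_lt ht (seq_mem n).1
    have hE := hdecay u hsol _ hs.le
    have hsplit := energy_eq_pd hL hu hs
    have hA0 : 0 ≤ ∫ x in (0:ℝ)..L, (pd L u (x, t + 1/((n:ℝ)+1)) (1,0))^2 :=
      intervalIntegral.integral_nonneg hL.le (fun y _ => sq_nonneg _)
    have hB0 : 0 ≤ ∫ x in (0:ℝ)..L, (pd L u (x, t + 1/((n:ℝ)+1)) (0,1))^2 :=
      intervalIntegral.integral_nonneg hL.le (fun y _ => sq_nonneg _)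
    have hC0 : 0 ≤ (pd L u (0, t + 1/((n:ℝ)+1)) (0,1))^2 := sq_nonneg _
    rw [hsplit] at hE
    refine ⟨by linarith, by linarith, by linarith⟩
  have hR : Filter.Tendsto (fun n : ℕ => 2 * M * Real.exp (-μ * (t + 1/((n:ℝ)+1))) * E0)
      Filter.atTop (nhds K) := by
    rw [hKdef]
    exact ((((Real.continuous_exp.tendsto _).comp
      (seq_tendsto.const_mul (-μ))).const_mul (2*M)).mul_const E0)
  have h10 : ‖(((1:ℝ), (0:ℝ)) : ℝ × ℝ)‖ ≤ 1 := by
    rw [Prod.norm_def]; simp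
  have h01 : ‖(((0:ℝ), (1:ℝ)) : ℝ × ℝ)‖ ≤ 1 := by
    rw [Prod.norm_def]; simp
  have KD : (∫ x in (0:ℝ)..L, (pd L u (x, t) (1,0))^2) ≤ K :=
    le_of_tendsto_of_tendsto' (tendsto_pd_sq_int hL hu (1,0) h10 ht) hR
      (fun n => (hbound n).1)
  have KDt : (∫ x in (0:ℝ)..L, (pd L u (x, t) (0,1))^2) ≤ K :=
    le_of_tendsto_of_tendsto' (tendsto_pd_sq_int hL hu (0,1) h01 ht) hR
      (fun n => (hbound n).2.1)
  have KB : (pd L u (0, t) (0,1))^2 ≤ K :=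
    le_of_tendsto_of_tendsto' (tendsto_pd_sq_pt hL hu (0,1) ht) hR
      (fun n => (hbound n).2.2)
  -- assembly
  refine ciInf_le_of_le ?_ (u 0 t) ?_
  · refine ⟨0, ?_⟩
    rintro y ⟨c, rfl⟩
    have n1 : 0 ≤ ∫ x in (0:ℝ)..L, (u x t - c)^2 :=
      intervalIntegral.integral_nonneg hL.le (fun y _ => sq_nonneg _)
    have n2 : 0 ≤ ∫ x in (0:ℝ)..L, (uX u x t)^2 :=
      intervalIntegral.integral_nonneg hL.le (fun y _ => sq_nonneg _)
    have n3 : 0 ≤ ∫ x in (0:ℝ)..L, (uT u x t)^2 :=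
      intervalIntegral.integral_nonneg hL.le (fun y _ => sq_nonneg _)
    have n4 : 0 ≤ (u 0 t - c)^2 := sq_nonneg _
    have n5 : 0 ≤ (uT u 0 t)^2 := sq_nonneg _
    simp only []
    linarith
  · have hA1 : (∫ x in (0:ℝ)..L, (u x t - u 0 t)^2)
        ≤ L^2 * ∫ y in (0:ℝ)..L, (pd L u (y, t) (1, 0))^2 := poincare hL hu ht
    have hA2 : (∫ x in (0:ℝ)..L, (uX u x t)^2)
        = ∫ x in (0:ℝ)..L, (pd L u (x, t) (1, 0))^2 := int_uX_eq hL hu ht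
    have hA3 : (∫ x in (0:ℝ)..L, (uT u x t)^2)
        ≤ ∫ x in (0:ℝ)..L, (pd L u (x, t) (0, 1))^2 := int_uT_le hL hu ht
    have hA4 : (uT u 0 t)^2 ≤ (pd L u (0, t) (0, 1))^2 :=
      uT_sq_le hu ht ⟨le_rfl, hL.le⟩
    have hL2 : (0:ℝ) ≤ L^2 := sq_nonneg L
    have hmul : L^2 * (∫ y in (0:ℝ)..L, (pd L u (y, t) (1, 0))^2) ≤ L^2 * K :=
      mul_le_mul_of_nonneg_left KD hL2
    have hself : (u 0 t - u 0 t)^2 = 0 := by ring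
    have hfin : 2 * M * (L^2 + 3) * Real.exp (-μ * t) * E0 = (L^2 + 3) * K := by
      rw [hKdef]; ring
    rw [hself, hfin]
    linarith
end

section
/- Let 𝓗 be a real Hilbert space, K a closed subspace of 𝓗, and E : 𝓗 → [0, ∞) a continuous function such that: (i) E(cX) = c²·E(X) for all c ≥ 0 and X ∈ 𝓗; (ii) there exists M₁ > 0 with M₁·‖X‖² ≤ E(X) for all X ∈ K; (iii) E(X + Y) = E(X) whenever X ∈ 𝓗 and Y belongs to the orthogonal complement of K. Then for every E₀ ≥ 0 the sublevel set B = {Z ∈ 𝓗 : E(Z) ≤ E₀} is nonempty, and for every X ∈ 𝓗 one has dist(X, B)² ≤ M₁⁻¹·max(E(X) − E₀, 0), where dist(X, B) = inf over Z ∈ B of ‖X − Z‖. -/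
/-- **Abstract distance estimate to energy sublevel sets** (appendix lemma).
Let `𝓗` be a real Hilbert space, `K` a closed subspace, and `E : 𝓗 → [0,∞)` a continuous
functional which is 2-homogeneous, bounded below by `M₁‖·‖²` on `K`, and invariant under
addition of elements of `Kᗮ`. Then every sublevel set `B = {E ≤ E₀}` with `E₀ ≥ 0` is nonempty
and `dist(X, B)² ≤ M₁⁻¹ {E(X) − E₀}⁺` for every `X`. -/
theorem dist_to_energy_sublevel
    {𝓗 : Type*} [NormedAddCommGroup 𝓗] [InnerProductSpace ℝ 𝓗] [CompleteSpace 𝓗]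
    (K : Submodule ℝ 𝓗) (hK : IsClosed (K : Set 𝓗))
    (E : 𝓗 → ℝ) (hEnonneg : ∀ X, 0 ≤ E X) (hEcont : Continuous E)
    (hhom : ∀ c : ℝ, 0 ≤ c → ∀ X : 𝓗, E (c • X) = c^2 * E X)
    (M₁ : ℝ) (hM₁ : 0 < M₁) (hlower : ∀ X ∈ K, M₁ * ‖X‖^2 ≤ E X)
    (hinv : ∀ X : 𝓗, ∀ Y ∈ Kᗮ, E (X + Y) = E X) :
    ∀ E₀ : ℝ, 0 ≤ E₀ →
      ({Z : 𝓗 | E Z ≤ E₀}.Nonempty ∧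
        ∀ X : 𝓗, (Metric.infDist X {Z : 𝓗 | E Z ≤ E₀})^2 ≤ M₁⁻¹ * max (E X - E₀) 0) := by
  intro E₀ hE₀
  have hE0 : E 0 = 0 := by
    have h := hhom 0 le_rfl 0
    simpa using h
  have hBne : ({Z : 𝓗 | E Z ≤ E₀} : Set 𝓗).Nonempty :=
    ⟨0, by simpa [Set.mem_setOf_eq, hE0] using hE₀⟩
  refine ⟨hBne, fun X => ?_⟩
  haveI : CompleteSpace K := hK.completeSpace_coe
  by_cases hX : E X ≤ E₀
  · have hmem : X ∈ {Z : 𝓗 | E Z ≤ E₀} := hX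
    rw [Metric.infDist_zero_of_mem hmem]
    simpa using mul_nonneg (inv_nonneg.2 hM₁.le) (le_max_right (E X - E₀) 0)
  · push_neg at hX
    have hEX : 0 < E X := lt_of_le_of_lt hE₀ hX
    set P : 𝓗 := (K.orthogonalProjectionOnto X : 𝓗) with hP
    have hPmem : P ∈ K := (K.orthogonalProjectionOnto X).2
    have hQmem : X - P ∈ Kᗮ := K.sub_starProjection_mem_orthogonal X
    have hEP : E P = E X := by
      have h := hinv P (X - P) hQmem
      simpa using h.symm
    set t := Real.sqrt (E₀ / E X) with hts
    have ht0 : 0 ≤ t := Real.sqrt_nonneg _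
    have ht2 : t ^ 2 = E₀ / E X := Real.sq_sqrt (by positivity)
    have ht2' : t ^ 2 * E X = E₀ := by
      rw [ht2]; field_simp
    have ht1 : t ≤ 1 := by
      rw [show (1 : ℝ) = Real.sqrt 1 by simp]
      exact Real.sqrt_le_sqrt (by rw [div_le_one hEX]; linarith)
    set Z := t • P + (X - P) with hZ
    have hZB : Z ∈ {Z : 𝓗 | E Z ≤ E₀} := by
      have h1 : E Z = E (t • P) := hinv (t • P) (X - P) hQmem
      have h2 : E (t • P) = t ^ 2 * E P := hhom t ht0 P
      simp only [Set.mem_setOf_eq]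
      rw [h1, h2, hEP, ht2']
    have hdist : dist X Z = (1 - t) * ‖P‖ := by
      have hXZ : X - Z = (1 - t) • P := by
        rw [hZ]; module
      rw [dist_eq_norm, hXZ, norm_smul, Real.norm_eq_abs,
        abs_of_nonneg (by linarith : (0:ℝ) ≤ 1 - t)]
    have hle : Metric.infDist X {Z : 𝓗 | E Z ≤ E₀} ≤ (1 - t) * ‖P‖ := by
      have := Metric.infDist_le_dist_of_mem (x := X) hZB
      linarith [hdist ▸ this]
    have hinf0 : 0 ≤ Metric.infDist X {Z : 𝓗 | E Z ≤ E₀} := Metric.infDist_nonneg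
    have hPn : M₁ * ‖P‖ ^ 2 ≤ E X := by
      have := hlower P hPmem
      rw [hEP] at this; exact this
    have hmax : max (E X - E₀) 0 = E X - E₀ := max_eq_left (by linarith)
    rw [hmax]
    have hsq : (Metric.infDist X {Z : 𝓗 | E Z ≤ E₀}) ^ 2 ≤ ((1 - t) * ‖P‖) ^ 2 :=
      pow_le_pow_left₀ hinf0 hle 2
    have key : ((1 - t) * ‖P‖) ^ 2 ≤ M₁⁻¹ * (E X - E₀) := by
      rw [mul_pow]
      have h1 : (1 - t) ^ 2 * (M₁ * ‖P‖ ^ 2) ≤ (1 - t) ^ 2 * E X :=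
        mul_le_mul_of_nonneg_left hPn (by positivity)
      have h2 : (1 - t) ^ 2 * E X ≤ E X - E₀ := by
        nlinarith [mul_le_mul_of_nonneg_right (mul_self_le_mul_self ht0 ht1) hEX.le]
      have h3 : M₁ * ((1 - t) ^ 2 * ‖P‖ ^ 2) ≤ E X - E₀ := by nlinarith
      calc (1 - t) ^ 2 * ‖P‖ ^ 2 = M₁⁻¹ * (M₁ * ((1 - t) ^ 2 * ‖P‖ ^ 2)) := by
            field_simp
        _ ≤ M₁⁻¹ * (E X - E₀) := mul_le_mul_of_nonneg_left h3 (inv_nonneg.2 hM₁.le)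
    linarith
end
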